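/- Fix i, j ∈ {1,…,N_k}, let δ > 0, let W(y|x) > 0 for all x, y, take the distance d(P) = −I(P) with thresholds Δ_i = −(R_i + δ) where R_i = t·H(P_i), and take the decoding metric q(i, P) = E_P[log W(Y|X)] − 2R_i. Then min_{P ∈ Γ_ij} { D(P_{XY} ‖ Q_{μ(i)} × W) + | I_P(X̄; X, Y) − R_j |⁺ } ≥ min_{Λ : Λ_X = Q_{μ(i)}, Λ_X̄ = Q_{μ(j)}, I(Λ) ≤ min(R_i, R_j) + δ} { I(Λ) + E_Λ[d_W(X, X̄)] } − R_i, where Γ_ij = { P_{XX̄Y} : P_X = Q_{μ(i)}, P_X̄ = Q_{μ(j)}, I(P_{XX̄}) ≤ min(R_i, R_j) + δ, E_{P_{XY}}[log W(Y|X)] − 2R_i ≤ E_{P_{X̄Y}}[log W(Y|X̄)] − 2R_j } (minima over empty sets = +∞). In particular, E_rgv^{(ij)}(P_V, W) ≥ t·e(R_i/t, P_V) + min_{Λ : Λ_X = Q_{μ(i)}, Λ_X̄ ∈ 𝒬_m, I(Λ) ≤ R_i + δ} { I(Λ) + E_Λ[d_W(X, X̄)] } − R_i. -/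

import Mathlib

open scoped BigOperators Classical

noncomputable section

namespace RGV

variable {α β γ : Type*}

/-- Empirical distribution (type) of a sequence. -/
def empDist [DecidableEq α] {n : ℕ} (x : Fin n → α) : α → ℝ :=
  fun a => ((Finset.univ.filter fun i => x i = a).card : ℝ) / n

/-- Joint empirical distribution of a pair of sequences. -/
def empDist2 [DecidableEq α] [DecidableEq β] {n : ℕ} (x : Fin n → α) (y : Fin n → β) :
    α × β → ℝ :=
  fun p => ((Finset.univ.filter fun i => x i = p.1 ∧ y i = p.2).card : ℝ) / n

/-- Joint empirical distribution of a triple of sequences. -/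
def empDist3 [DecidableEq α] [DecidableEq β] [DecidableEq γ] {n : ℕ}
    (x : Fin n → α) (x' : Fin n → β) (y : Fin n → γ) : α × β × γ → ℝ :=
  fun p => ((Finset.univ.filter fun i => x i = p.1 ∧ x' i = p.2.1 ∧ y i = p.2.2).card : ℝ) / n

/-- The type class `T^n(Q)`: all sequences in `αⁿ` with empirical distribution `Q`. -/
def typeClass [Fintype α] [DecidableEq α] (n : ℕ) (Q : α → ℝ) : Finset (Fin n → α) :=
  Finset.univ.filter fun x => empDist x = Q

/-- `p` is a probability distribution on the finite set `α`. -/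
def IsProbDist [Fintype α] (p : α → ℝ) : Prop :=
  (∀ a, 0 ≤ p a) ∧ ∑ a, p a = 1

/-- Shannon entropy (natural logarithm; `Real.log 0 = 0` gives the `0 log 0 = 0` convention). -/
def entropy [Fintype α] (p : α → ℝ) : ℝ := -∑ a, p a * Real.log (p a)

/-- Kullback–Leibler divergence (convention `0 log 0 = 0`). -/
def klDiv [Fintype α] (p q : α → ℝ) : ℝ := ∑ a, p a * Real.log (p a / q a)

def fstMarg [Fintype β] (p : α × β → ℝ) : α → ℝ := fun a => ∑ b, p (a, b)

def sndMarg [Fintype α] (p : α × β → ℝ) : β → ℝ := fun b => ∑ a, p (a, b)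

/-- Mutual information of a joint distribution on `α × β`. -/
def mutualInfo [Fintype α] [Fintype β] (p : α × β → ℝ) : ℝ :=
  ∑ q, p q * Real.log (p q / (fstMarg p q.1 * sndMarg p q.2))

/- Marginals of a joint distribution on a triple `X × X̄ × Y` (ordering `(x, x̄, y)`). -/

def margX [Fintype β] [Fintype γ] (p : α × β × γ → ℝ) : α → ℝ :=
  fun a => ∑ b, ∑ c, p (a, b, c)

def margXbar [Fintype α] [Fintype γ] (p : α × β × γ → ℝ) : β → ℝ :=
  fun b => ∑ a, ∑ c, p (a, b, c)

def margXY [Fintype β] (p : α × β × γ → ℝ) : α × γ → ℝ :=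
  fun q => ∑ b, p (q.1, b, q.2)

def margXbarY [Fintype α] (p : α × β × γ → ℝ) : β × γ → ℝ :=
  fun q => ∑ a, p (a, q.1, q.2)

def margXXbar [Fintype γ] (p : α × β × γ → ℝ) : α × β → ℝ :=
  fun q => ∑ c, p (q.1, q.2, c)

/-- Mutual information `I_P(X̄; (X,Y))` for a joint distribution `P` on `X × X̄ × Y`. -/
def miXbarXY [Fintype α] [Fintype β] [Fintype γ] (p : α × β × γ → ℝ) : ℝ :=
  mutualInfo (fun q : β × α × γ => p (q.2.1, q.1, q.2.2))

/-- Bhattacharyya distance `d_W(x, x') = -log Σ_y √(W(y|x) W(y|x'))`. -/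
def dW {𝒳 𝒴 : Type*} [Fintype 𝒴] (W : 𝒳 → 𝒴 → ℝ) (x x' : 𝒳) : ℝ :=
  -Real.log (∑ y, Real.sqrt (W x y * W x' y))

/-- Source reliability function `e(R, P_V) = min_{Q : H(Q) ≥ R} D(Q‖P_V)`. -/
def srcRel {𝒱 : Type*} [Fintype 𝒱] (R : ℝ) (PV : 𝒱 → ℝ) : ℝ :=
  sInf {z | ∃ Q : 𝒱 → ℝ, IsProbDist Q ∧ R ≤ entropy Q ∧ z = klDiv Q PV}

/-- Random-coding error exponent
`E_r(Q, R) = min_{P_{XY} : P_X = Q} D(P‖Q×W) + |I_P(X;Y) − R|⁺`. -/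
def Er {𝒳 𝒴 : Type*} [Fintype 𝒳] [Fintype 𝒴] (W : 𝒳 → 𝒴 → ℝ) (Q : 𝒳 → ℝ) (R : ℝ) : ℝ :=
  sInf {z | ∃ P : 𝒳 × 𝒴 → ℝ, IsProbDist P ∧ fstMarg P = Q ∧
    z = klDiv P (fun r => Q r.1 * W r.1 r.2) + max (mutualInfo P - R) 0}

/-- Csiszár's generalized expurgated exponent (with slack `δ` in the mutual
information constraint):
`E'_ex,δ(Q, 𝒬, R) = min_{Λ : Λ_X = Q, Λ_X̄ ∈ 𝒬, I(Λ) ≤ R+δ} E_Λ[d_W] + I(Λ) − R`. -/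
def EexPrime {𝒳 𝒴 : Type*} [Fintype 𝒳] [Fintype 𝒴] (W : 𝒳 → 𝒴 → ℝ) (Q : 𝒳 → ℝ)
    (Qset : Set (𝒳 → ℝ)) (R δ : ℝ) : ℝ :=
  sInf ((fun Λ : 𝒳 × 𝒳 → ℝ => (∑ p : 𝒳 × 𝒳, Λ p * dW W p.1 p.2) + mutualInfo Λ - R) ''
    {Λ | IsProbDist Λ ∧ fstMarg Λ = Q ∧ sndMarg Λ ∈ Qset ∧ mutualInfo Λ ≤ R + δ})

/-- The data of the random Gilbert–Varshamov joint source-channel code construction: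
an enumeration `srcType` of the types of `𝒱^k` (ordered by their index in `Fin Nk`),
a collection `Q` of codeword types with assignment `μ`, a symmetric distance `dd`
depending on a pair of sequences only through their joint type,
minimum-distance thresholds `Δ`, and an ordering `ord` of the source messages in which
the source-type index is nondecreasing. -/
structure Setup (𝒱 𝒳 : Type*) [Fintype 𝒱] [DecidableEq 𝒱] [Fintype 𝒳] [DecidableEq 𝒳]
    (k n : ℕ) where
  Nk : ℕ
  srcType : Fin Nk → 𝒱 → ℝ
  srcType_inj : Function.Injective srcType
  srcType_isType : ∀ i, ∃ v : Fin k → 𝒱, empDist v = srcType i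
  cls : (Fin k → 𝒱) → Fin Nk
  cls_spec : ∀ v, empDist v = srcType (cls v)
  m : ℕ
  Q : Fin m → 𝒳 → ℝ
  Q_isType : ∀ c, ∃ x : Fin n → 𝒳, empDist x = Q c
  μ : Fin Nk → Fin m
  dd : (𝒳 × 𝒳 → ℝ) → ℝ
  dd_symm : ∀ P : 𝒳 × 𝒳 → ℝ, dd (fun p => P (p.2, p.1)) = dd P
  Δ : Fin Nk → ℝ
  ord : (Fin k → 𝒱) ≃ Fin (Fintype.card (Fin k → 𝒱))
  ord_mono : ∀ v w : Fin k → 𝒱, ord v ≤ ord w → cls v ≤ cls w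

namespace Setup

variable {𝒱 𝒳 𝒴 : Type*} [Fintype 𝒱] [DecidableEq 𝒱] [Fintype 𝒳] [DecidableEq 𝒳]
  [Fintype 𝒴] [DecidableEq 𝒴] {k n : ℕ}

/-- The distance on sequences induced by the joint-type-dependent distance `dd`. -/
def d (S : Setup 𝒱 𝒳 k n) (x x' : Fin n → 𝒳) : ℝ := S.dd (empDist2 x x')

/-- The set from which the codeword of the message `v` is drawn uniformly, given the
codewords `f w` of the messages `w` generated before `v`: all sequences in the type class
`T^n(Q_{μ(cls v)})` at distance greater than `max (Δ (cls v)) (Δ (cls w))` from every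
previously generated codeword `f w`.  (For `w` in the same class this is the
within-class constraint `d > Δ_i`; for `w` in an earlier class `j` it is
`d > max (Δ_i, Δ_j)`.) -/
def admissible (S : Setup 𝒱 𝒳 k n) (f : (Fin k → 𝒱) → Fin n → 𝒳) (v : Fin k → 𝒱) :
    Finset (Fin n → 𝒳) :=
  (typeClass n (S.Q (S.μ (S.cls v)))).filter fun z =>
    ∀ w, S.ord w < S.ord v → max (S.Δ (S.cls v)) (S.Δ (S.cls w)) < S.d (f w) z

/-- The probability that the sequential RGV construction produces exactly the
codebook `f` : at each step the codeword is drawn uniformly from the admissible set. -/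
def prob (S : Setup 𝒱 𝒳 k n) (f : (Fin k → 𝒱) → Fin n → 𝒳) : ℝ :=
  ∏ v, if f v ∈ S.admissible f v then ((S.admissible f v).card : ℝ)⁻¹ else 0

/-- Probability of an event under the random RGV codebook. -/
def probEvent (S : Setup 𝒱 𝒳 k n) (E : ((Fin k → 𝒱) → Fin n → 𝒳) → Prop) : ℝ :=
  ∑ f, if E f then S.prob f else 0

/-- `ζ_n = N_k (n+1)^{|𝒳|² + |𝒳|}`. -/
def zeta (S : Setup 𝒱 𝒳 k n) : ℝ :=
  (S.Nk : ℝ) * (n + 1 : ℝ) ^ (Fintype.card 𝒳 ^ 2 + Fintype.card 𝒳)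

/-- The discard condition: for each codeword type class `T^n(Q_c)`, the number of
sequences violating the distance constraints is at most `ζ_n |T^n(Q_c)| e^{-nδ}`. -/
def DiscardCond (S : Setup 𝒱 𝒳 k n) (δ : ℝ) : Prop :=
  ∀ c : Fin S.m, ∀ xt : Fin S.Nk → Fin n → 𝒳,
    (∀ j, xt j ∈ typeClass n (S.Q (S.μ j))) →
    ∑ j : Fin S.Nk,
        (((typeClass n (S.Q c)).filter fun z => S.d z (xt j) ≤ S.Δ j).card : ℝ) *
          ((typeClass k (S.srcType j)).card : ℝ)
      ≤ S.zeta * ((typeClass n (S.Q c)).card : ℝ) * Real.exp (-(n : ℝ) * δ)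

/-- The constraint set `Γ_ij` of Theorem 1. -/
def Gamma (S : Setup 𝒱 𝒳 k n) (q : Fin S.Nk → (𝒳 × 𝒴 → ℝ) → ℝ) (i j : Fin S.Nk) :
    Set (𝒳 × 𝒳 × 𝒴 → ℝ) :=
  {P | IsProbDist P ∧ margX P = S.Q (S.μ i) ∧ margXbar P = S.Q (S.μ j) ∧
    max (S.Δ i) (S.Δ j) ≤ S.dd (margXXbar P) ∧ q i (margXY P) ≤ q j (margXbarY P)}

/-- `exp(-n E_rgv^{(ij)}(P_V, W))`, where
`E_rgv^{(ij)} = t e(R_i/t, P_V) + min_{P ∈ Γ_ij} { D(P_XY ‖ Q_{μ(i)} × W) +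
|I_P(X̄; X,Y) − R_j|⁺ }` and `R_i = t H(P_i)`; when `Γ_ij = ∅` the minimum is `+∞`
and the term is `0`. -/
def ErgvTerm (S : Setup 𝒱 𝒳 k n) (t : ℝ) (PV : 𝒱 → ℝ) (W : 𝒳 → 𝒴 → ℝ)
    (q : Fin S.Nk → (𝒳 × 𝒴 → ℝ) → ℝ) (i j : Fin S.Nk) : ℝ :=
  if (S.Gamma q i j).Nonempty then
    Real.exp (-(n : ℝ) * (t * srcRel (t * entropy (S.srcType i) / t) PV +
      sInf ((fun P => klDiv (margXY P) (fun r => S.Q (S.μ i) r.1 * W r.1 r.2) +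
        max (miXbarXY P - t * entropy (S.srcType j)) 0) '' S.Gamma q i j)))
  else 0

/-- The ensemble average error probability: the expectation over the random codebook of
the probability (over the source message and channel output) that the decoder `dec`
does not output the transmitted message. -/
def avgErr (S : Setup 𝒱 𝒳 k n) (PV : 𝒱 → ℝ) (W : 𝒳 → 𝒴 → ℝ)
    (dec : ((Fin k → 𝒱) → Fin n → 𝒳) → (Fin n → 𝒴) → Fin k → 𝒱) : ℝ :=
  ∑ f : (Fin k → 𝒱) → Fin n → 𝒳, S.prob f *
    ∑ v : Fin k → 𝒱, (∏ l, PV (v l)) *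
      ∑ y : Fin n → 𝒴, (∏ l, W (f v l) (y l)) * (if dec f y = v then 0 else 1)

end Setup

section AuxStatement10

private lemma sub_le_mul_log_div {a c : ℝ} (ha : 0 ≤ a) (hc : 0 ≤ c) (hac : 0 < a → 0 < c) :
    a - c ≤ a * Real.log (a / c) := by
  rcases ha.lt_or_eq with h | h
  · have hc' := hac h
    have h1 : Real.log (c / a) ≤ c / a - 1 := Real.log_le_sub_one_of_pos (div_pos hc' h)
    have h2 : a * Real.log (c / a) ≤ a * (c / a - 1) := mul_le_mul_of_nonneg_left h1 h.le
    have h3 : a * (c / a - 1) = c - a := by field_simp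
    have h4 : Real.log (a / c) = -Real.log (c / a) := by
      rw [← Real.log_inv, inv_div]
    rw [h4, mul_neg]
    linarith
  · rw [← h]
    simp only [zero_sub, zero_mul]
    linarith

private lemma sum_mul_log_div_ge {ι : Type*} (s : Finset ι) (a b : ι → ℝ)
    (ha : ∀ i ∈ s, 0 ≤ a i) (hb : ∀ i ∈ s, 0 < b i) :
    (∑ i ∈ s, a i) * Real.log ((∑ i ∈ s, a i) / (∑ i ∈ s, b i)) ≤
      ∑ i ∈ s, a i * Real.log (a i / b i) := by
  rcases (Finset.sum_nonneg ha).lt_or_eq with hS | hS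
  · have hs : s.Nonempty := Finset.nonempty_of_sum_ne_zero hS.ne'
    have hB : 0 < ∑ i ∈ s, b i := Finset.sum_pos hb hs
    set S := ∑ i ∈ s, a i with hSdef
    set B := ∑ i ∈ s, b i with hBdef
    have key : ∀ i ∈ s, a i - b i * (S / B) ≤
        a i * Real.log (a i / b i) - a i * Real.log (S / B) := by
      intro i hi
      rcases (ha i hi).lt_or_eq with hai | hai
      · have hbi := hb i hi
        have h1 : a i - b i * (S / B) ≤ a i * Real.log (a i / (b i * (S / B))) :=
          sub_le_mul_log_div hai.le (by positivity) (fun _ => by positivity)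
        have h2 : Real.log (a i / (b i * (S / B))) =
            Real.log (a i / b i) - Real.log (S / B) := by
          rw [div_mul_eq_div_div, Real.log_div (div_pos hai hbi).ne' (div_pos hS hB).ne']
        calc a i - b i * (S / B) ≤ a i * Real.log (a i / (b i * (S / B))) := h1
          _ = a i * Real.log (a i / b i) - a i * Real.log (S / B) := by rw [h2]; ring
      · have hbi := hb i hi
        rw [← hai]
        have h5 : 0 < b i * (S / B) := by positivity
        simp only [zero_sub, zero_mul]
        linarith
    have hsum := Finset.sum_le_sum key
    rw [Finset.sum_sub_distrib, Finset.sum_sub_distrib, ← Finset.sum_mul, ← Finset.sum_mul]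
      at hsum
    have hBS : B * (S / B) = S := by field_simp
    rw [← hSdef, ← hBdef] at hsum
    linarith [hsum, hBS.ge, hBS.le]
  · have hz := (Finset.sum_eq_zero_iff_of_nonneg ha).mp hS.symm
    rw [← hS, zero_mul]
    exact Finset.sum_nonneg fun i hi => by rw [hz i hi]; simp

private lemma mutualInfo_nonneg' {α β : Type*} [Fintype α] [Fintype β] (p : α × β → ℝ)
    (hp : IsProbDist p) : 0 ≤ mutualInfo p := by
  have hX : ∀ a, 0 ≤ fstMarg p a := fun a => Finset.sum_nonneg fun b _ => hp.1 _
  have hY : ∀ b, 0 ≤ sndMarg p b := fun b => Finset.sum_nonneg fun a _ => hp.1 _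
  have hmarg : ∑ q : α × β, fstMarg p q.1 * sndMarg p q.2 = 1 := by
    rw [Fintype.sum_prod_type]
    have h0 : ∀ a : α, ∑ b, fstMarg p a * sndMarg p b = fstMarg p a * ∑ b, sndMarg p b :=
      fun a => (Finset.mul_sum _ _ _).symm
    rw [Finset.sum_congr rfl fun a _ => h0 a, ← Finset.sum_mul]
    have h1 : ∑ a, fstMarg p a = 1 := by
      rw [← hp.2, Fintype.sum_prod_type]
      exact Finset.sum_congr rfl fun a _ => rfl
    have h2 : ∑ b, sndMarg p b = 1 := by
      rw [← hp.2, Fintype.sum_prod_type]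
      exact Finset.sum_comm
    rw [h1, h2, one_mul]
  have key : ∀ q : α × β, q ∈ Finset.univ → p q - fstMarg p q.1 * sndMarg p q.2 ≤
      p q * Real.log (p q / (fstMarg p q.1 * sndMarg p q.2)) := by
    intro q _
    refine sub_le_mul_log_div (hp.1 q) (mul_nonneg (hX _) (hY _)) fun hq => ?_
    have h1 : p q ≤ fstMarg p q.1 :=
      Finset.single_le_sum (f := fun b => p (q.1, b)) (fun b _ => hp.1 _) (Finset.mem_univ q.2)
    have h2 : p q ≤ sndMarg p q.2 :=
      Finset.single_le_sum (f := fun a => p (a, q.2)) (fun a _ => hp.1 _) (Finset.mem_univ q.1)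
    exact mul_pos (lt_of_lt_of_le hq h1) (lt_of_lt_of_le hq h2)
  have hkey := Finset.sum_le_sum key
  rw [Finset.sum_sub_distrib, hp.2, hmarg] at hkey
  unfold mutualInfo
  linarith

private lemma dW_nonneg' {𝒳 𝒴 : Type*} [Fintype 𝒴] (W : 𝒳 → 𝒴 → ℝ)
    (hW : ∀ x, IsProbDist (W x)) (x x' : 𝒳) : 0 ≤ dW W x x' := by
  have h0 : 0 ≤ ∑ y, Real.sqrt (W x y * W x' y) :=
    Finset.sum_nonneg fun y _ => Real.sqrt_nonneg _
  have h1 : (∑ y, Real.sqrt (W x y * W x' y)) ^ 2 ≤ 1 := by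
    have hcs := Finset.sum_mul_sq_le_sq_mul_sq Finset.univ (fun y => Real.sqrt (W x y))
      (fun y => Real.sqrt (W x' y))
    have e0 : ∀ y, Real.sqrt (W x y * W x' y) = Real.sqrt (W x y) * Real.sqrt (W x' y) :=
      fun y => Real.sqrt_mul ((hW x).1 y) _
    have e1 : ∑ y, Real.sqrt (W x y) ^ 2 = 1 := by
      rw [Finset.sum_congr rfl fun y _ => Real.sq_sqrt ((hW x).1 y)]
      exact (hW x).2
    have e2 : ∑ y, Real.sqrt (W x' y) ^ 2 = 1 := by
      rw [Finset.sum_congr rfl fun y _ => Real.sq_sqrt ((hW x').1 y)]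
      exact (hW x').2
    calc (∑ y, Real.sqrt (W x y * W x' y)) ^ 2
        = (∑ y, Real.sqrt (W x y) * Real.sqrt (W x' y)) ^ 2 := by
          rw [Finset.sum_congr rfl fun y _ => e0 y]
      _ ≤ (∑ y, Real.sqrt (W x y) ^ 2) * (∑ y, Real.sqrt (W x' y) ^ 2) := hcs
      _ = 1 := by rw [e1, e2, one_mul]
  have h2 : ∑ y, Real.sqrt (W x y * W x' y) ≤ 1 := by nlinarith
  have h3 := Real.log_nonpos h0 h2
  unfold dW
  linarith

private lemma sum_triple {α β γ : Type*} [Fintype α] [Fintype β] [Fintype γ]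
    (f : α × β × γ → ℝ) :
    ∑ q : α × β × γ, f q = ∑ a, ∑ b, ∑ c, f (a, b, c) := by
  rw [Fintype.sum_prod_type]
  exact Finset.sum_congr rfl fun a _ => Fintype.sum_prod_type _

end AuxStatement10
private lemma core_ineq {𝒳 𝒴 : Type*} [Fintype 𝒳] [Fintype 𝒴]
    (W : 𝒳 → 𝒴 → ℝ) (hW : ∀ x, IsProbDist (W x)) (hWpos : ∀ x y, 0 < W x y)
    (Ri Rj : ℝ) (P : 𝒳 × 𝒳 × 𝒴 → ℝ) (hP : IsProbDist P)
    (hq : (∑ r : 𝒳 × 𝒴, margXY P r * Real.log (W r.1 r.2)) - 2 * Ri ≤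
      (∑ r : 𝒳 × 𝒴, margXbarY P r * Real.log (W r.1 r.2)) - 2 * Rj) :
    mutualInfo (margXXbar P) + (∑ p : 𝒳 × 𝒳, margXXbar P p * dW W p.1 p.2) - Ri ≤
      klDiv (margXY P) (fun r => margX P r.1 * W r.1 r.2) +
        max (miXbarXY P - Rj) 0 := by
  have hP0 : ∀ q, 0 ≤ P q := hP.1
  have hΛ0 : ∀ a b, 0 ≤ margXXbar P (a, b) :=
    fun a b => Finset.sum_nonneg fun c _ => hP0 _
  have hgeΛ : ∀ a b c, P (a, b, c) ≤ margXXbar P (a, b) := fun a b c =>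
    Finset.single_le_sum (f := fun c => P (a, b, c)) (fun c _ => hP0 _) (Finset.mem_univ c)
  have hgeX : ∀ a b, margXXbar P (a, b) ≤ margX P a := fun a b =>
    Finset.single_le_sum (f := fun b => ∑ c, P (a, b, c))
      (fun b _ => Finset.sum_nonneg fun c _ => hP0 _) (Finset.mem_univ b)
  have hgeXbar : ∀ a b, margXXbar P (a, b) ≤ margXbar P b := fun a b =>
    Finset.single_le_sum (f := fun a => ∑ c, P (a, b, c))
      (fun a _ => Finset.sum_nonneg fun c _ => hP0 _) (Finset.mem_univ a)
  have hgeXY : ∀ a b c, P (a, b, c) ≤ margXY P (a, c) := fun a b c =>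
    Finset.single_le_sum (f := fun b => P (a, b, c)) (fun b _ => hP0 _) (Finset.mem_univ b)
  -- rewrite of E1
  have eE1 : ∑ r : 𝒳 × 𝒴, margXY P r * Real.log (W r.1 r.2)
      = ∑ q : 𝒳 × 𝒳 × 𝒴, P q * Real.log (W q.1 q.2.2) := by
    calc ∑ r : 𝒳 × 𝒴, margXY P r * Real.log (W r.1 r.2)
        = ∑ a, ∑ c, ∑ b, P (a, b, c) * Real.log (W a c) := by
          rw [Fintype.sum_prod_type]
          refine Finset.sum_congr rfl fun a _ => Finset.sum_congr rfl fun c _ => ?_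
          show (∑ b, P (a, b, c)) * Real.log (W a c) = _
          exact Finset.sum_mul _ _ _
      _ = ∑ a, ∑ b, ∑ c, P (a, b, c) * Real.log (W a c) :=
          Finset.sum_congr rfl fun a _ => Finset.sum_comm
      _ = ∑ q : 𝒳 × 𝒳 × 𝒴, P q * Real.log (W q.1 q.2.2) :=
          (sum_triple (fun q : 𝒳 × 𝒳 × 𝒴 => P q * Real.log (W q.1 q.2.2))).symm
  have eE2 : ∑ r : 𝒳 × 𝒴, margXbarY P r * Real.log (W r.1 r.2)
      = ∑ q : 𝒳 × 𝒳 × 𝒴, P q * Real.log (W q.2.1 q.2.2) := by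
    calc ∑ r : 𝒳 × 𝒴, margXbarY P r * Real.log (W r.1 r.2)
        = ∑ b, ∑ c, ∑ a, P (a, b, c) * Real.log (W b c) := by
          rw [Fintype.sum_prod_type]
          refine Finset.sum_congr rfl fun b _ => Finset.sum_congr rfl fun c _ => ?_
          show (∑ a, P (a, b, c)) * Real.log (W b c) = _
          exact Finset.sum_mul _ _ _
      _ = ∑ b, ∑ a, ∑ c, P (a, b, c) * Real.log (W b c) :=
          Finset.sum_congr rfl fun b _ => Finset.sum_comm
      _ = ∑ a, ∑ b, ∑ c, P (a, b, c) * Real.log (W b c) := Finset.sum_comm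
      _ = ∑ q : 𝒳 × 𝒳 × 𝒴, P q * Real.log (W q.2.1 q.2.2) :=
          (sum_triple (fun q : 𝒳 × 𝒳 × 𝒴 => P q * Real.log (W q.2.1 q.2.2))).symm
  have hfst : fstMarg (margXXbar P) = margX P := rfl
  have hsnd : sndMarg (margXXbar P) = margXbar P := rfl
  have eMI : mutualInfo (margXXbar P) = ∑ q : 𝒳 × 𝒳 × 𝒴,
      P q * Real.log (margXXbar P (q.1, q.2.1) / (margX P q.1 * margXbar P q.2.1)) := by
    unfold mutualInfo
    rw [hfst, hsnd]
    calc ∑ p : 𝒳 × 𝒳, margXXbar P p * Real.log (margXXbar P p / (margX P p.1 * margXbar P p.2))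
        = ∑ a, ∑ b, ∑ c, P (a, b, c) *
            Real.log (margXXbar P (a, b) / (margX P a * margXbar P b)) := by
          rw [Fintype.sum_prod_type]
          refine Finset.sum_congr rfl fun a _ => Finset.sum_congr rfl fun b _ => ?_
          show (∑ c, P (a, b, c)) * Real.log (margXXbar P (a, b) / (margX P a * margXbar P b)) = _
          exact Finset.sum_mul _ _ _
      _ = ∑ q : 𝒳 × 𝒳 × 𝒴,
            P q * Real.log (margXXbar P (q.1, q.2.1) / (margX P q.1 * margXbar P q.2.1)) :=
          (sum_triple (fun q : 𝒳 × 𝒳 × 𝒴 =>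
            P q * Real.log (margXXbar P (q.1, q.2.1) / (margX P q.1 * margXbar P q.2.1)))).symm
  have eA : klDiv (margXY P) (fun r => margX P r.1 * W r.1 r.2) = ∑ q : 𝒳 × 𝒳 × 𝒴,
      P q * Real.log (margXY P (q.1, q.2.2) / (margX P q.1 * W q.1 q.2.2)) := by
    unfold klDiv
    calc ∑ r : 𝒳 × 𝒴, margXY P r * Real.log (margXY P r / (margX P r.1 * W r.1 r.2))
        = ∑ a, ∑ c, ∑ b, P (a, b, c) *
            Real.log (margXY P (a, c) / (margX P a * W a c)) := by
          rw [Fintype.sum_prod_type]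
          refine Finset.sum_congr rfl fun a _ => Finset.sum_congr rfl fun c _ => ?_
          show (∑ b, P (a, b, c)) * Real.log (margXY P (a, c) / (margX P a * W a c)) = _
          exact Finset.sum_mul _ _ _
      _ = ∑ a, ∑ b, ∑ c, P (a, b, c) *
            Real.log (margXY P (a, c) / (margX P a * W a c)) :=
          Finset.sum_congr rfl fun a _ => Finset.sum_comm
      _ = ∑ q : 𝒳 × 𝒳 × 𝒴,
            P q * Real.log (margXY P (q.1, q.2.2) / (margX P q.1 * W q.1 q.2.2)) :=
          (sum_triple (fun q : 𝒳 × 𝒳 × 𝒴 =>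
            P q * Real.log (margXY P (q.1, q.2.2) / (margX P q.1 * W q.1 q.2.2)))).symm
  have hfst' : fstMarg (fun q : 𝒳 × 𝒳 × 𝒴 => P (q.2.1, q.1, q.2.2)) = margXbar P := by
    funext b
    show ∑ r : 𝒳 × 𝒴, P (r.1, b, r.2) = margXbar P b
    rw [Fintype.sum_prod_type]
    rfl
  have hsnd' : sndMarg (fun q : 𝒳 × 𝒳 × 𝒴 => P (q.2.1, q.1, q.2.2)) = margXY P := rfl
  have eB : miXbarXY P = ∑ q : 𝒳 × 𝒳 × 𝒴,
      P q * Real.log (P q / (margXbar P q.2.1 * margXY P (q.1, q.2.2))) := by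
    unfold miXbarXY mutualInfo
    rw [hfst', hsnd']
    calc ∑ r : 𝒳 × 𝒳 × 𝒴, P (r.2.1, r.1, r.2.2) *
          Real.log (P (r.2.1, r.1, r.2.2) / (margXbar P r.1 * margXY P r.2))
        = ∑ b, ∑ a, ∑ c, P (a, b, c) *
            Real.log (P (a, b, c) / (margXbar P b * margXY P (a, c))) := sum_triple _
      _ = ∑ a, ∑ b, ∑ c, P (a, b, c) *
            Real.log (P (a, b, c) / (margXbar P b * margXY P (a, c))) := Finset.sum_comm
      _ = ∑ q : 𝒳 × 𝒳 × 𝒴,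
            P q * Real.log (P q / (margXbar P q.2.1 * margXY P (q.1, q.2.2))) :=
          (sum_triple (fun q : 𝒳 × 𝒳 × 𝒴 =>
            P q * Real.log (P q / (margXbar P q.2.1 * margXY P (q.1, q.2.2))))).symm
  have key : ∀ q : 𝒳 × 𝒳 × 𝒴,
      P q * Real.log (margXY P (q.1, q.2.2) / (margX P q.1 * W q.1 q.2.2)) +
        P q * Real.log (P q / (margXbar P q.2.1 * margXY P (q.1, q.2.2)))
      = P q * Real.log (margXXbar P (q.1, q.2.1) / (margX P q.1 * margXbar P q.2.1)) +
          P q * Real.log (P q / (margXXbar P (q.1, q.2.1) *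
            Real.sqrt (W q.1 q.2.2 * W q.2.1 q.2.2))) +
          1 / 2 * (P q * Real.log (W q.2.1 q.2.2)) -
          1 / 2 * (P q * Real.log (W q.1 q.2.2)) := by
    intro q
    rcases (hP0 q).lt_or_eq with hpq | hpq
    · have h1 : 0 < margXY P (q.1, q.2.2) := lt_of_lt_of_le hpq (hgeXY q.1 q.2.1 q.2.2)
      have h2 : 0 < margXXbar P (q.1, q.2.1) := lt_of_lt_of_le hpq (hgeΛ q.1 q.2.1 q.2.2)
      have h3 : 0 < margX P q.1 := lt_of_lt_of_le h2 (hgeX q.1 q.2.1)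
      have h4 : 0 < margXbar P q.2.1 := lt_of_lt_of_le h2 (hgeXbar q.1 q.2.1)
      have h5 : 0 < W q.1 q.2.2 := hWpos _ _
      have h6 : 0 < W q.2.1 q.2.2 := hWpos _ _
      have hsq : 0 < Real.sqrt (W q.1 q.2.2 * W q.2.1 q.2.2) :=
        Real.sqrt_pos.mpr (mul_pos h5 h6)
      have h7 : Real.log (Real.sqrt (W q.1 q.2.2 * W q.2.1 q.2.2)) =
          (Real.log (W q.1 q.2.2) + Real.log (W q.2.1 q.2.2)) / 2 := by
        rw [Real.log_sqrt (by positivity), Real.log_mul h5.ne' h6.ne']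
      rw [Real.log_div h1.ne' (mul_pos h3 h5).ne',
          Real.log_div hpq.ne' (mul_pos h4 h1).ne',
          Real.log_div h2.ne' (mul_pos h3 h4).ne',
          Real.log_div hpq.ne' (mul_pos h2 hsq).ne',
          Real.log_mul h3.ne' h5.ne', Real.log_mul h4.ne' h1.ne',
          Real.log_mul h3.ne' h4.ne', Real.log_mul h2.ne' hsq.ne', h7]
      ring
    · rw [← hpq]
      ring_nf
  have sumkey :
      (∑ q : 𝒳 × 𝒳 × 𝒴,
          P q * Real.log (margXY P (q.1, q.2.2) / (margX P q.1 * W q.1 q.2.2))) +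
        (∑ q : 𝒳 × 𝒳 × 𝒴,
          P q * Real.log (P q / (margXbar P q.2.1 * margXY P (q.1, q.2.2))))
      = (∑ q : 𝒳 × 𝒳 × 𝒴,
            P q * Real.log (margXXbar P (q.1, q.2.1) / (margX P q.1 * margXbar P q.2.1))) +
          (∑ q : 𝒳 × 𝒳 × 𝒴,
            P q * Real.log (P q / (margXXbar P (q.1, q.2.1) *
              Real.sqrt (W q.1 q.2.2 * W q.2.1 q.2.2)))) +
          1 / 2 * (∑ q : 𝒳 × 𝒳 × 𝒴, P q * Real.log (W q.2.1 q.2.2)) -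
          1 / 2 * (∑ q : 𝒳 × 𝒳 × 𝒴, P q * Real.log (W q.1 q.2.2)) := by
    rw [← Finset.sum_add_distrib, Finset.mul_sum, Finset.mul_sum,
      ← Finset.sum_add_distrib, ← Finset.sum_add_distrib, ← Finset.sum_sub_distrib]
    exact Finset.sum_congr rfl fun q _ => key q
  have hT'G : (∑ p : 𝒳 × 𝒳, margXXbar P p * dW W p.1 p.2) ≤
      ∑ q : 𝒳 × 𝒳 × 𝒴, P q * Real.log (P q / (margXXbar P (q.1, q.2.1) *
        Real.sqrt (W q.1 q.2.2 * W q.2.1 q.2.2))) := by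
    rw [Fintype.sum_prod_type, sum_triple]
    refine Finset.sum_le_sum fun a _ => Finset.sum_le_sum fun b _ => ?_
    show margXXbar P (a, b) * dW W a b ≤
        ∑ c, P (a, b, c) * Real.log (P (a, b, c) /
          (margXXbar P (a, b) * Real.sqrt (W a c * W b c)))
    rcases (hΛ0 a b).lt_or_eq with hΛ | hΛ
    · have hy : (Finset.univ : Finset 𝒴).Nonempty := by
        by_contra hcon
        rw [Finset.not_nonempty_iff_eq_empty] at hcon
        have h1 := (hW a).2
        rw [hcon, Finset.sum_empty] at h1
        norm_num at h1
      have hs : 0 < ∑ c, Real.sqrt (W a c * W b c) :=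
        Finset.sum_pos (fun c _ => Real.sqrt_pos.mpr (mul_pos (hWpos a c) (hWpos b c))) hy
      have hls := sum_mul_log_div_ge Finset.univ (fun c => P (a, b, c))
        (fun c => margXXbar P (a, b) * Real.sqrt (W a c * W b c))
        (fun c _ => hP0 _)
        (fun c _ => mul_pos hΛ (Real.sqrt_pos.mpr (mul_pos (hWpos a c) (hWpos b c))))
      have e1 : ∑ c, P (a, b, c) = margXXbar P (a, b) := rfl
      have e2 : ∑ c, margXXbar P (a, b) * Real.sqrt (W a c * W b c)
          = margXXbar P (a, b) * ∑ c, Real.sqrt (W a c * W b c) :=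
        (Finset.mul_sum _ _ _).symm
      rw [e1, e2] at hls
      have e3 : margXXbar P (a, b) / (margXXbar P (a, b) * ∑ c, Real.sqrt (W a c * W b c))
          = (∑ c, Real.sqrt (W a c * W b c))⁻¹ := by
        rw [div_mul_eq_div_div, div_self hΛ.ne', one_div]
      rw [e3, Real.log_inv] at hls
      have e4 : dW W a b = -Real.log (∑ c, Real.sqrt (W a c * W b c)) := rfl
      rw [e4]
      exact hls
    · have hz : ∀ c, P (a, b, c) = 0 := by
        intro c
        have hall := (Finset.sum_eq_zero_iff_of_nonneg
          (fun c (_ : c ∈ Finset.univ) => hP0 (a, b, c))).mp hΛ.symm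
        exact hall c (Finset.mem_univ c)
      rw [← hΛ, zero_mul]
      exact Finset.sum_nonneg fun c _ => by rw [hz c]; simp
  rw [eE1, eE2] at hq
  have goal' : mutualInfo (margXXbar P) +
      (∑ p : 𝒳 × 𝒳, margXXbar P p * dW W p.1 p.2) - Ri ≤
      klDiv (margXY P) (fun r => margX P r.1 * W r.1 r.2) + (miXbarXY P - Rj) := by
    rw [eMI, eA, eB]
    linarith [sumkey, hT'G, hq]
  exact goal'.trans (add_le_add_right (le_max_left _ _) _)
/-- With distance `d(P) = −I(P)`, thresholds `Δ_i = −(R_i + δ)`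
(so the distance constraint in `Γ_ij` reads `I(P_XX̄) ≤ min(R_i, R_j) + δ`) and the
decoding metric `q(i, P) = E_P[log W(Y|X)] − 2R_i`, every `P ∈ Γ_ij` (membership spelled
out as hypotheses) satisfies
`D(P_XY ‖ Q_{μ(i)} × W) + |I_P(X̄; X,Y) − R_j|⁺
  ≥ min_{Λ : Λ_X = Q_{μ(i)}, Λ_X̄ = Q_{μ(j)}, I(Λ) ≤ min(R_i,R_j)+δ}
      {I(Λ) + E_Λ[d_W(X, X̄)]} − R_i`,
and in particular
`t e(R_i/t, P_V) + D(P_XY ‖ Q_{μ(i)} × W) + |I_P(X̄; X,Y) − R_j|⁺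
  ≥ t e(R_i/t, P_V) + min_{Λ : Λ_X = Q_{μ(i)}, Λ_X̄ ∈ 𝒬_m, I(Λ) ≤ R_i+δ}
      {I(Λ) + E_Λ[d_W(X, X̄)]} − R_i`,
which is the expurgated lower bound on `E_rgv^{(ij)}(P_V, W)`. -/
theorem statement_10 {𝒱 𝒳 𝒴 : Type*} [Fintype 𝒱] [Fintype 𝒳] [Fintype 𝒴]
    (t δ : ℝ) (hδ : 0 < δ) (PV : 𝒱 → ℝ) (hPV : IsProbDist PV)
    (W : 𝒳 → 𝒴 → ℝ) (hW : ∀ x, IsProbDist (W x)) (hWpos : ∀ x y, 0 < W x y)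
    (Pti Ptj : 𝒱 → ℝ) (Qi Qj : 𝒳 → ℝ) (Qset : Set (𝒳 → ℝ)) (hQj : Qj ∈ Qset)
    (P : 𝒳 × 𝒳 × 𝒴 → ℝ) (hP : IsProbDist P)
    (hPX : margX P = Qi) (hPXbar : margXbar P = Qj)
    (hI : mutualInfo (margXXbar P) ≤ min (t * entropy Pti) (t * entropy Ptj) + δ)
    (hq : (∑ r : 𝒳 × 𝒴, margXY P r * Real.log (W r.1 r.2)) - 2 * (t * entropy Pti) ≤
      (∑ r : 𝒳 × 𝒴, margXbarY P r * Real.log (W r.1 r.2)) - 2 * (t * entropy Ptj)) :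
    sInf ((fun Λ : 𝒳 × 𝒳 → ℝ => mutualInfo Λ + ∑ p : 𝒳 × 𝒳, Λ p * dW W p.1 p.2) ''
          {Λ | IsProbDist Λ ∧ fstMarg Λ = Qi ∧ sndMarg Λ = Qj ∧
            mutualInfo Λ ≤ min (t * entropy Pti) (t * entropy Ptj) + δ}) -
        t * entropy Pti ≤
      klDiv (margXY P) (fun r => Qi r.1 * W r.1 r.2) +
        max (miXbarXY P - t * entropy Ptj) 0 ∧
    t * srcRel (t * entropy Pti / t) PV +
        (sInf ((fun Λ : 𝒳 × 𝒳 → ℝ =>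
            mutualInfo Λ + ∑ p : 𝒳 × 𝒳, Λ p * dW W p.1 p.2) ''
          {Λ | IsProbDist Λ ∧ fstMarg Λ = Qi ∧ sndMarg Λ ∈ Qset ∧
            mutualInfo Λ ≤ t * entropy Pti + δ}) - t * entropy Pti) ≤
      t * srcRel (t * entropy Pti / t) PV +
        (klDiv (margXY P) (fun r => Qi r.1 * W r.1 r.2) +
          max (miXbarXY P - t * entropy Ptj) 0) := by
  have hcore := core_ineq W hW hWpos (t * entropy Pti) (t * entropy Ptj) P hP hq
  rw [hPX] at hcore
  have hΛprob : IsProbDist (margXXbar P) := by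
    constructor
    · intro p
      exact Finset.sum_nonneg fun c _ => hP.1 _
    · have h1 : ∑ p : 𝒳 × 𝒳, margXXbar P p = ∑ q : 𝒳 × 𝒳 × 𝒴, P q := by
        rw [sum_triple P, Fintype.sum_prod_type]
        exact Finset.sum_congr rfl fun a _ => rfl
      rw [h1, hP.2]
  have hlb : ∀ Λ : 𝒳 × 𝒳 → ℝ, IsProbDist Λ →
      0 ≤ mutualInfo Λ + ∑ p : 𝒳 × 𝒳, Λ p * dW W p.1 p.2 := by
    intro Λ hΛ
    have h1 := mutualInfo_nonneg' Λ hΛ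
    have h2 : 0 ≤ ∑ p : 𝒳 × 𝒳, Λ p * dW W p.1 p.2 :=
      Finset.sum_nonneg fun p _ => mul_nonneg (hΛ.1 p) (dW_nonneg' W hW p.1 p.2)
    linarith
  constructor
  · have hmem1 : margXXbar P ∈ {Λ : 𝒳 × 𝒳 → ℝ | IsProbDist Λ ∧ fstMarg Λ = Qi ∧
        sndMarg Λ = Qj ∧ mutualInfo Λ ≤ min (t * entropy Pti) (t * entropy Ptj) + δ} :=
      ⟨hΛprob, hPX, hPXbar, hI⟩
    have hbdd1 : BddBelow ((fun Λ : 𝒳 × 𝒳 → ℝ =>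
        mutualInfo Λ + ∑ p : 𝒳 × 𝒳, Λ p * dW W p.1 p.2) ''
        {Λ | IsProbDist Λ ∧ fstMarg Λ = Qi ∧ sndMarg Λ = Qj ∧
          mutualInfo Λ ≤ min (t * entropy Pti) (t * entropy Ptj) + δ}) := by
      refine ⟨0, ?_⟩
      rintro z ⟨Λ, hΛ, rfl⟩
      exact hlb Λ hΛ.1
    have h1 := csInf_le hbdd1 (Set.mem_image_of_mem _ hmem1)
    linarith [hcore]
  · apply add_le_add_right
    have hmem2 : margXXbar P ∈ {Λ : 𝒳 × 𝒳 → ℝ | IsProbDist Λ ∧ fstMarg Λ = Qi ∧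
        sndMarg Λ ∈ Qset ∧ mutualInfo Λ ≤ t * entropy Pti + δ} := by
      refine ⟨hΛprob, hPX, ?_, ?_⟩
      · show margXbar P ∈ Qset
        rw [hPXbar]
        exact hQj
      · refine hI.trans ?_
        have := min_le_left (t * entropy Pti) (t * entropy Ptj)
        linarith
    have hbdd2 : BddBelow ((fun Λ : 𝒳 × 𝒳 → ℝ =>
        mutualInfo Λ + ∑ p : 𝒳 × 𝒳, Λ p * dW W p.1 p.2) ''
        {Λ | IsProbDist Λ ∧ fstMarg Λ = Qi ∧ sndMarg Λ ∈ Qset ∧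
          mutualInfo Λ ≤ t * entropy Pti + δ}) := by
      refine ⟨0, ?_⟩
      rintro z ⟨Λ, hΛ, rfl⟩
      exact hlb Λ hΛ.1
    have h2 := csInf_le hbdd2 (Set.mem_image_of_mem _ hmem2)
    linarith [hcore]
end RGV
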